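/- (Stacking of the Calderón–Zygmund decomposition lemma.) Let A ⊆ B ⊆ Q₁ be Lebesgue measurable subsets of the unit cube in ℝⁿ and 0 < δ < 1. Assume (i) |A| ≤ δ, and (ii) for every dyadic cube Q ⊆ Q₁ with |A ∩ Q| > δ|Q|, the predecessor Q̃ of Q satisfies Q̃ ⊆ B. Then |A| ≤ δ|B|. -/

import Mathlib

open MeasureTheory Set

/-- The dyadic cube of generation `i` with index `m : Fin n → ℕ` inside the unit cube:
`∏_j [m j / 2^i, (m j + 1) / 2^i]`.  Generation `0` with index `0` is the unit cube `Q₁`. -/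
def dyadicCube (n i : ℕ) (m : Fin n → ℕ) : Set (Fin n → ℝ) :=
  {x | ∀ j, (m j : ℝ) / 2 ^ i ≤ x j ∧ x j ≤ ((m j : ℝ) + 1) / 2 ^ i}

section CZAux
open Metric Filter
open scoped NNReal ENNReal Topology

namespace CZ
variable {n : ℕ}

/-! ### Basic geometry of dyadic cubes -/

def unitIco (n : ℕ) : Set (Fin n → ℝ) := Set.pi univ fun _ => Ico (0:ℝ) 1

/-- The half-open dyadic cube. -/
def ho (n i : ℕ) (m : Fin n → ℕ) : Set (Fin n → ℝ) :=
  Set.pi univ fun j => Ico ((m j : ℝ) / 2 ^ i) (((m j : ℝ) + 1) / 2 ^ i)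

lemma cc_eq_pi (i : ℕ) (m : Fin n → ℕ) :
    dyadicCube n i m = Set.pi univ fun j => Icc ((m j : ℝ) / 2 ^ i) (((m j : ℝ) + 1) / 2 ^ i) := by
  ext x; simp [dyadicCube, Set.mem_pi, forall_and, Pi.le_def]

lemma ho_subset_cc (i : ℕ) (m : Fin n → ℕ) : ho n i m ⊆ dyadicCube n i m := by
  rw [cc_eq_pi]; exact Set.pi_mono fun j _ => Ico_subset_Icc_self

lemma measurable_cc (i : ℕ) (m : Fin n → ℕ) : MeasurableSet (dyadicCube n i m) := by
  rw [cc_eq_pi]; exact MeasurableSet.univ_pi fun j => measurableSet_Icc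

lemma measurable_ho (i : ℕ) (m : Fin n → ℕ) : MeasurableSet (ho n i m) :=
  MeasurableSet.univ_pi fun j => measurableSet_Ico

lemma volume_cc (i : ℕ) (m : Fin n → ℕ) :
    volume (dyadicCube n i m) = (ENNReal.ofReal (((2:ℝ) ^ i)⁻¹)) ^ n := by
  rw [cc_eq_pi, volume_pi_pi]
  have : ∀ j : Fin n, volume (Icc ((m j : ℝ) / 2 ^ i) (((m j : ℝ) + 1) / 2 ^ i))
      = ENNReal.ofReal (((2:ℝ) ^ i)⁻¹) := by
    intro j; rw [Real.volume_Icc]; ring_nf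
  simp [this]

lemma volume_ho (i : ℕ) (m : Fin n → ℕ) :
    volume (ho n i m) = (ENNReal.ofReal (((2:ℝ) ^ i)⁻¹)) ^ n := by
  rw [ho, volume_pi_pi]
  have : ∀ j : Fin n, volume (Ico ((m j : ℝ) / 2 ^ i) (((m j : ℝ) + 1) / 2 ^ i))
      = ENNReal.ofReal (((2:ℝ) ^ i)⁻¹) := by
    intro j; rw [Real.volume_Ico]; ring_nf
  simp [this]

lemma volume_cc_ne_zero (i : ℕ) (m : Fin n → ℕ) : volume (dyadicCube n i m) ≠ 0 := by
  rw [volume_cc]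
  exact (ENNReal.pow_pos (ENNReal.ofReal_pos.2 (by positivity)) n).ne'

lemma volume_cc_ne_top (i : ℕ) (m : Fin n → ℕ) : volume (dyadicCube n i m) ≠ ⊤ := by
  rw [volume_cc]; exact ENNReal.pow_ne_top ENNReal.ofReal_ne_top

lemma volume_cc_zero (m : Fin n → ℕ) : volume (dyadicCube n 0 m) = 1 := by
  rw [volume_cc]; norm_num

/-! ### Indexing of half-open dyadic cubes -/

/-- Index of the half-open dyadic cube of generation `i` containing `x`. -/
noncomputable def idx (i : ℕ) (x : Fin n → ℝ) (j : Fin n) : ℕ := ⌊x j * 2 ^ i⌋₊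

lemma mem_ho_iff {i : ℕ} {m : Fin n → ℕ} {x : Fin n → ℝ} :
    x ∈ ho n i m ↔ ∀ j, (m j : ℝ) ≤ x j * 2 ^ i ∧ x j * 2 ^ i < (m j : ℝ) + 1 := by
  simp only [ho, Set.mem_pi, mem_univ, forall_true_left, mem_Ico]
  refine forall_congr' fun j => ?_
  rw [div_le_iff₀ (by positivity), lt_div_iff₀ (by positivity)]

lemma mem_ho_idx {i : ℕ} {x : Fin n → ℝ} (hx : x ∈ unitIco n) : x ∈ ho n i (idx i x) := by
  rw [mem_ho_iff]
  intro j
  have h0 : (0:ℝ) ≤ x j := (hx j (mem_univ j)).1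
  exact ⟨Nat.floor_le (by positivity), Nat.lt_floor_add_one _⟩

lemma idx_lt {i : ℕ} {x : Fin n → ℝ} (hx : x ∈ unitIco n) (j : Fin n) :
    idx i x j < 2 ^ i := by
  have h1 : x j < 1 := (hx j (mem_univ j)).2
  have h0 : (0:ℝ) ≤ x j := (hx j (mem_univ j)).1
  rw [idx, Nat.floor_lt (by positivity)]
  push_cast
  nlinarith [pow_pos (by norm_num : (0:ℝ) < 2) i]

lemma idx_unique {i : ℕ} {m : Fin n → ℕ} {x : Fin n → ℝ} (hx : x ∈ ho n i m) :
    m = idx i x := by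
  funext j
  rw [mem_ho_iff] at hx
  obtain ⟨h1, h2⟩ := hx j
  have h0 : (0:ℝ) ≤ x j * 2 ^ i := le_trans (by positivity) h1
  exact ((Nat.floor_eq_iff h0).2 ⟨h1, h2⟩).symm

lemma idx_succ_div (i : ℕ) (x : Fin n → ℝ) (j : Fin n) :
    idx (i+1) x j / 2 = idx i x j := by
  have : x j * 2 ^ (i+1) / (2:ℕ) = x j * 2 ^ i := by push_cast; ring
  rw [idx, idx, ← Nat.floor_div_natCast, this]

lemma idx_div_pow (i d : ℕ) (x : Fin n → ℝ) (j : Fin n) :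
    idx (i + d) x j / 2 ^ d = idx i x j := by
  induction d with
  | zero => simp
  | succ d ih =>
      have h1 : i + (d + 1) = (i + d) + 1 := by ring
      rw [h1, pow_succ, mul_comm, ← Nat.div_div_eq_div_mul, idx_succ_div, ih]

lemma ho_subset_unitIco {i : ℕ} {m : Fin n → ℕ} (hm : ∀ j, m j < 2 ^ i) :
    ho n i m ⊆ unitIco n := by
  intro x hx
  rw [mem_ho_iff] at hx
  intro j _
  obtain ⟨h1, h2⟩ := hx j
  have hp : (0:ℝ) < 2 ^ i := by positivity
  constructor
  · nlinarith [(Nat.cast_nonneg (m j) : (0:ℝ) ≤ m j)]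
  · have : (m j : ℝ) + 1 ≤ 2 ^ i := by exact_mod_cast hm j
    nlinarith

lemma idx_zero {x : Fin n → ℝ} (hx : x ∈ unitIco n) : idx 0 x = fun _ => 0 := by
  funext j
  have h1 : x j < 1 := (hx j (mem_univ j)).2
  have h0 : (0:ℝ) ≤ x j := (hx j (mem_univ j)).1
  simp only [idx, pow_zero, mul_one]
  exact Nat.floor_eq_zero.2 h1

/-! ### The Vitali family adapted to dyadic cubes -/

lemma volume_closedBall (x : Fin n → ℝ) {r : ℝ} (hr : 0 ≤ r) :
    volume (closedBall x r) = (ENNReal.ofReal (2 * r)) ^ n := by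
  rw [closedBall_pi x hr, volume_pi_pi]
  have : ∀ j : Fin n, volume (closedBall (x j) r) = ENNReal.ofReal (2 * r) := by
    intro j
    rw [Real.closedBall_eq_Icc, Real.volume_Icc]
    ring_nf
  simp [this]

lemma cc_subset_closedBall {i : ℕ} {m : Fin n → ℕ} {x : Fin n → ℝ}
    (hx : x ∈ dyadicCube n i m) :
    dyadicCube n i m ⊆ closedBall x (((2:ℝ) ^ i)⁻¹) := by
  intro y hy
  rw [mem_closedBall, dist_pi_le_iff (by positivity)]
  intro j
  obtain ⟨h1, h2⟩ := hy j
  obtain ⟨h3, h4⟩ := hx j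
  rw [Real.dist_eq, abs_sub_le_iff]
  have hp : (0:ℝ) < 2 ^ i := by positivity
  have key : ((m j:ℝ)+1)/2^i - (m j:ℝ)/2^i = ((2:ℝ)^i)⁻¹ := by field_simp; ring
  constructor <;> linarith

/-- The Vitali family adapted to dyadic cubes. -/
noncomputable def vf (n : ℕ) : VitaliFamily (volume : Measure (Fin n → ℝ)) :=
  Vitali.vitaliFamily volume ((6:ℝ≥0) ^ n) <| by
    intro x
    apply Filter.Eventually.frequently
    filter_upwards [self_mem_nhdsWithin] with r (hr : 0 < r)
    rw [volume_closedBall x (by linarith : (0:ℝ) ≤ 3 * r), volume_closedBall x hr.le]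
    calc (ENNReal.ofReal (2 * (3 * r))) ^ n = ((3 : ℝ≥0∞) * ENNReal.ofReal (2 * r)) ^ n := by
          rw [← ENNReal.ofReal_ofNat, ← ENNReal.ofReal_mul (by norm_num)]
          ring_nf
      _ ≤ ((6:ℝ≥0) ^ n : ℝ≥0) * (ENNReal.ofReal (2 * r)) ^ n := by
          rw [mul_pow]
          push_cast
          gcongr
          norm_num

/-- A dyadic cube containing `x` belongs to the Vitali family at `x`. -/
lemma cc_mem_vf (i : ℕ) (m : Fin n → ℕ) {x : Fin n → ℝ} (hx : x ∈ dyadicCube n i m) :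
    dyadicCube n i m ∈ (vf n).setsAt x := by
  refine ⟨?_, ?_, ((2:ℝ)^i)⁻¹, cc_subset_closedBall hx, ?_⟩
  · rw [cc_eq_pi]; exact isClosed_set_pi fun j _ => isClosed_Icc
  · have hsub : (Set.pi univ fun j => Ioo ((m j : ℝ) / 2 ^ i) (((m j : ℝ) + 1) / 2 ^ i))
        ⊆ interior (dyadicCube n i m) := by
      apply interior_maximal
      · rw [cc_eq_pi]; exact Set.pi_mono fun j _ => Ioo_subset_Icc_self
      · exact isOpen_set_pi finite_univ fun j _ => isOpen_Ioo
    refine Nonempty.mono hsub ⟨fun j => ((m j : ℝ) + 2⁻¹) / 2 ^ i, fun j _ => ?_⟩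
    have hp : (0:ℝ) < 2 ^ i := by positivity
    constructor
    · rw [div_lt_div_iff₀ hp hp]; nlinarith
    · rw [div_lt_div_iff₀ hp hp]; nlinarith
  · rw [volume_closedBall x (by positivity), volume_cc]
    calc (ENNReal.ofReal (2 * (3 * ((2:ℝ)^i)⁻¹))) ^ n
        = ((6 : ℝ≥0∞) * ENNReal.ofReal (((2:ℝ)^i)⁻¹)) ^ n := by
          rw [← ENNReal.ofReal_ofNat 6, ← ENNReal.ofReal_mul (by norm_num)]
          ring_nf
      _ ≤ ((6:ℝ≥0) ^ n : ℝ≥0) * (ENNReal.ofReal (((2:ℝ)^i)⁻¹)) ^ n := le_of_eq (by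
          rw [mul_pow]; push_cast; norm_num)

/-! ### The density lemma -/

lemma density_zero (A : Set (Fin n → ℝ)) (hAm : MeasurableSet A) {δ : ℝ} (hδ1 : δ < 1) :
    volume {x | x ∈ A ∧ x ∈ unitIco n ∧ ∀ i : ℕ,
      volume (A ∩ dyadicCube n (i+1) (idx (i+1) x)) ≤
        ENNReal.ofReal δ * volume (dyadicCube n (i+1) (idx (i+1) x))} = 0 := by
  set v := vf n
  have H := v.ae_tendsto_measure_inter_div A
  rw [Filter.eventually_iff, mem_ae_iff] at H
  rw [Measure.restrict_apply' hAm] at H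
  refine measure_mono_null (fun x hx => ?_) H
  obtain ⟨hxA, hxI, hxb⟩ := hx
  refine ⟨fun hT => ?_, hxA⟩
  -- `hT : Tendsto (fun a => volume (A ∩ a) / volume a) (v.filterAt x) (𝓝 1)`
  simp only [mem_compl_iff, mem_setOf_eq, not_not] at hT
  have hc : Filter.Tendsto (fun i : ℕ => dyadicCube n (i+1) (idx (i+1) x))
      Filter.atTop (v.filterAt x) := by
    rw [VitaliFamily.tendsto_filterAt_iff]
    constructor
    · exact Filter.Eventually.of_forall fun i =>
        cc_mem_vf _ _ (ho_subset_cc _ _ (mem_ho_idx hxI))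
    · intro ε hε
      have h2 : Filter.Tendsto (fun i : ℕ => ((2:ℝ) ^ (i+1))⁻¹) Filter.atTop (𝓝 0) :=
        tendsto_inv_atTop_zero.comp
          ((tendsto_pow_atTop_atTop_of_one_lt (by norm_num : (1:ℝ) < 2)).comp
            (tendsto_add_atTop_nat 1))
      filter_upwards [h2.eventually (gt_mem_nhds hε)] with i hi
      exact (cc_subset_closedBall (ho_subset_cc _ _ (mem_ho_idx hxI))).trans
        (closedBall_subset_closedBall hi.le)
  have hlim := hT.comp hc
  have hbound : ∀ i : ℕ,
      volume (A ∩ dyadicCube n (i+1) (idx (i+1) x)) / volume (dyadicCube n (i+1) (idx (i+1) x))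
        ≤ ENNReal.ofReal δ := fun i => by
    rw [ENNReal.div_le_iff (volume_cc_ne_zero _ _) (volume_cc_ne_top _ _)]
    calc volume (A ∩ dyadicCube n (i+1) (idx (i+1) x))
        ≤ ENNReal.ofReal δ * volume (dyadicCube n (i+1) (idx (i+1) x)) := hxb i
      _ = _ := by ring
  have h1 : (1 : ℝ≥0∞) ≤ ENNReal.ofReal δ :=
    le_of_tendsto hlim (Filter.Eventually.of_forall hbound)
  have : ENNReal.ofReal δ < 1 := ENNReal.ofReal_lt_one.2 hδ1
  exact absurd (h1.trans_lt this) (lt_irrefl _)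

end CZ
end CZAux
section CZMain
open Metric Filter CZ
open scoped NNReal ENNReal Topology

/-- Calderón–Zygmund stacking lemma.  If `A ⊆ B ⊆ Q₁`, `|A| ≤ δ`, and every
dyadic cube `Q` with `|A ∩ Q| > δ|Q|` has its predecessor `Q̃` contained in `B`, then
`|A| ≤ δ|B|`. -/
theorem calderon_zygmund_stacking (n : ℕ) (A B : Set (Fin n → ℝ))
    (hAm : MeasurableSet A) (hBm : MeasurableSet B)
    (hAB : A ⊆ B) (hBQ : B ⊆ dyadicCube n 0 0)
    (δ : ℝ) (hδ0 : 0 < δ) (hδ1 : δ < 1)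
    (hA : volume A ≤ ENNReal.ofReal δ)
    (hdyadic : ∀ (i : ℕ) (m : Fin n → ℕ), (∀ j, m j < 2 ^ (i + 1)) →
      ENNReal.ofReal δ * volume (dyadicCube n (i + 1) m) <
        volume (A ∩ dyadicCube n (i + 1) m) →
      dyadicCube n i (fun j => m j / 2) ⊆ B) :
    volume A ≤ ENNReal.ofReal δ * volume B := by
  classical
  set δ' := ENNReal.ofReal δ with hδ'def
  -- `good i x` : the half-open cube of generation `i+1` through `x` sees too much of `A`.
  set good : ℕ → (Fin n → ℝ) → Prop := fun i x =>
    δ' * volume (dyadicCube n (i+1) (CZ.idx (i+1) x)) <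
      volume (A ∩ dyadicCube n (i+1) (CZ.idx (i+1) x)) with hgood_def
  set D : Set (Fin n → ℝ) := {x | x ∈ CZ.unitIco n ∧ ∃ i, good i x} with hD_def
  set k : (Fin n → ℝ) → ℕ := fun x => sInf {i | good i x} with hk_def
  set Sel : ℕ → (Fin n → ℕ) → Prop := fun i m => ∃ x, x ∈ D ∧ k x = i ∧ CZ.idx i x = m
    with hSel_def
  set K : (Fin n → ℝ) → ℕ := fun x => sInf {i | Sel i (CZ.idx i x)} with hK_def
  set T : Set (ℕ × (Fin n → ℕ)) := {p | ∃ x, x ∈ D ∧ p.1 = K x ∧ p.2 = CZ.idx (K x) x}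
    with hT_def
  have hkx : ∀ x ∈ D, good (k x) x := fun x hx => Nat.sInf_mem hx.2
  have hkmin : ∀ x ∈ D, ∀ j, j < k x → ¬ good j x := fun x hx j hj =>
    Nat.notMem_of_lt_sInf hj
  have hSelK : ∀ x ∈ D, Sel (K x) (CZ.idx (K x) x) := fun x hx =>
    Nat.sInf_mem (⟨k x, x, hx, rfl, rfl⟩ : {i | Sel i (CZ.idx i x)}.Nonempty)
  have hKle : ∀ x, ∀ i, Sel i (CZ.idx i x) → K x ≤ i := fun x i hi => Nat.sInf_le hi
  -- bounds on the indices appearing in `T`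
  have hTbound : ∀ p ∈ T, ∀ j, p.2 j < 2 ^ p.1 := by
    rintro ⟨i, m⟩ ⟨x, hxD, h1, h2⟩ j
    simp only at h1 h2
    subst h1; rw [h2]
    exact CZ.idx_lt hxD.1 j
  -- each selected cube sees at most a `δ`-proportion of `A`, and its closed version is in `B`
  have hTmeas : ∀ p ∈ T, volume (A ∩ dyadicCube n p.1 p.2) ≤ δ' * volume (dyadicCube n p.1 p.2) := by
    intro p hp
    obtain ⟨x, hxD, h1, h2⟩ := hp
    obtain ⟨y, hyD, hky, hidxy⟩ := hSelK x hxD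
    rw [h1, h2, ← hidxy, ← hky]
    rcases hj : k y with _ | j
    · -- generation 0 : the whole unit cube
      rw [CZ.idx_zero hyD.1]
      have hQ : dyadicCube n 0 (fun _ => (0:ℕ)) = dyadicCube n 0 0 := rfl
      rw [hQ, CZ.volume_cc_zero, mul_one]
      calc volume (A ∩ dyadicCube n 0 0) ≤ volume A := measure_mono inter_subset_left
        _ ≤ δ' := hA
    · -- generation `j+1` : minimality of `k y`
      exact not_lt.1 (hkmin y hyD j (by omega))
  have hTB : ∀ p ∈ T, dyadicCube n p.1 p.2 ⊆ B := by
    intro p hp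
    obtain ⟨x, hxD, h1, h2⟩ := hp
    obtain ⟨y, hyD, hky, hidxy⟩ := hSelK x hxD
    rw [h1, h2, ← hidxy, ← hky]
    have hg := hkx y hyD
    have hsub := hdyadic (k y) (CZ.idx (k y + 1) y) (fun j => CZ.idx_lt hyD.1 j) hg
    have : (fun j => CZ.idx (k y + 1) y j / 2) = CZ.idx (k y) y := by
      funext j; exact CZ.idx_succ_div (k y) y j
    rwa [this] at hsub
  -- distinct selected half-open cubes are disjoint
  have key0 : ∀ p ∈ T, ∀ q ∈ T, p.1 ≤ q.1 →
      ∀ z, z ∈ CZ.ho n p.1 p.2 → z ∈ CZ.ho n q.1 q.2 → p = q := by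
    rintro ⟨i, m⟩ hp ⟨i', m'⟩ hq hle z hzp hzq
    obtain ⟨x, hxD, hp1, hp2⟩ := hp
    obtain ⟨x', hx'D, hq1, hq2⟩ := hq
    simp only at hp1 hp2 hq1 hq2 hle hzp hzq ⊢
    have hmi : CZ.idx i z = m := by
      exact (CZ.idx_unique hzp).symm
    have hmi' : CZ.idx i' z = m' := (CZ.idx_unique hzq).symm
    set d := i' - i with hd_def
    have hd : i + d = i' := by omega
    have hx'q : CZ.idx i' x' = m' := by rw [hq2, ← hq1]
    have hx'i : CZ.idx i x' = m := by
      funext j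
      have e1 : CZ.idx i x' j = CZ.idx i' x' j / 2 ^ d := by
        rw [← hd, CZ.idx_div_pow]
      have e2 : CZ.idx i z j = CZ.idx i' z j / 2 ^ d := by
        rw [← hd, CZ.idx_div_pow]
      rw [e1, hx'q, ← hmi', ← e2, hmi]
    have hSelim : Sel i m := by
      rw [hp2, hp1]
      exact hSelK x hxD
    have hKx' : K x' ≤ i := hKle x' i (by rw [hx'i]; exact hSelim)
    have hii' : i = i' := le_antisymm hle (by rw [hq1]; exact hKx')
    subst hii'
    have : m = m' := by rw [← hmi, hmi']
    simp [this]
  have key : ∀ p ∈ T, ∀ q ∈ T, p ≠ q →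
      Disjoint (CZ.ho n p.1 p.2) (CZ.ho n q.1 q.2) := by
    intro p hp q hq hne
    rw [Set.disjoint_left]
    intro z hzp hzq
    rcases le_total p.1 q.1 with h | h
    · exact hne (key0 p hp q hq h z hzp hzq)
    · exact hne ((key0 q hq p hp h z hzq hzp).symm)
  -- the union of the selected half-open cubes
  set U : Set (Fin n → ℝ) := ⋃ p ∈ T, CZ.ho n p.1 p.2 with hU_def
  have hTcount : T.Countable := T.to_countable
  have hUB : U ⊆ B := by
    rw [hU_def]
    refine Set.iUnion₂_subset fun p hp => ?_
    exact (CZ.ho_subset_cc p.1 p.2).trans (hTB p hp)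
  -- the density (bad) set
  set Z : Set (Fin n → ℝ) := {x | x ∈ A ∧ x ∈ CZ.unitIco n ∧ ∀ i : ℕ,
      volume (A ∩ dyadicCube n (i+1) (CZ.idx (i+1) x)) ≤
        δ' * volume (dyadicCube n (i+1) (CZ.idx (i+1) x))} with hZ_def
  have hZ0 : volume Z = 0 := CZ.density_zero A hAm hδ1
  -- A is a.e. inside the unit half-open cube
  have hAQ : A ⊆ dyadicCube n 0 0 := hAB.trans hBQ
  have hbd : volume (A \ CZ.unitIco n) = 0 := by
    have hsub : A \ CZ.unitIco n ⊆
        ⋃ j : Fin n, Set.pi univ (fun j' => if j' = j then Icc (1:ℝ) 1 else Icc 0 1) := by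
      rintro x ⟨hxA, hxI⟩
      have hx01 : ∀ j, 0 ≤ x j ∧ x j ≤ 1 := by
        intro j
        have := hAQ hxA j
        simpa using this
      rw [CZ.unitIco, Set.mem_pi] at hxI
      push_neg at hxI
      obtain ⟨j, _, hj⟩ := hxI
      rw [mem_Ico] at hj
      push_neg at hj
      have hxj : x j = 1 := le_antisymm (hx01 j).2 (hj (hx01 j).1)
      refine Set.mem_iUnion.2 ⟨j, ?_⟩
      intro j' _
      by_cases h : j' = j <;> simp [h, hxj, (hx01 j').1, (hx01 j').2]
    refine measure_mono_null hsub (measure_iUnion_null fun j => ?_)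
    rw [volume_pi_pi]
    refine Finset.prod_eq_zero (Finset.mem_univ j) ?_
    simp [Real.volume_Icc]
  -- covering : a.e. point of `A` lies in `Z` or in `U`
  have hcover : A ∩ CZ.unitIco n ⊆ Z ∪ (A ∩ U) := by
    rintro x ⟨hxA, hxI⟩
    by_cases h : ∃ i, good i x
    · refine Or.inr ⟨hxA, ?_⟩
      have hxD : x ∈ D := ⟨hxI, h⟩
      rw [hU_def]
      refine Set.mem_biUnion (show (K x, CZ.idx (K x) x) ∈ T from ⟨x, hxD, rfl, rfl⟩) ?_
      exact CZ.mem_ho_idx hxI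
    · push_neg at h
      refine Or.inl ⟨hxA, hxI, fun i => ?_⟩
      exact not_lt.1 (h i)
  -- the summation over the selected cubes
  have hAU : volume (A ∩ U) ≤ δ' * volume B := by
    have hAUeq : A ∩ U = ⋃ p ∈ T, A ∩ CZ.ho n p.1 p.2 := by
      rw [hU_def, Set.inter_iUnion₂]
    have hpd : T.PairwiseDisjoint (fun p => A ∩ CZ.ho n p.1 p.2) := by
      intro p hp q hq hne
      exact ((key p hp q hq hne).mono inter_subset_right inter_subset_right)
    have hpd' : T.PairwiseDisjoint (fun p => CZ.ho n p.1 p.2) := by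
      intro p hp q hq hne
      exact key p hp q hq hne
    rw [hAUeq, measure_biUnion hTcount hpd
      (fun p _ => hAm.inter (CZ.measurable_ho p.1 p.2))]
    have hterm : ∀ p : T, volume (A ∩ CZ.ho n (p:ℕ × (Fin n → ℕ)).1 (p:ℕ × (Fin n → ℕ)).2)
        ≤ δ' * volume (CZ.ho n (p:ℕ × (Fin n → ℕ)).1 (p:ℕ × (Fin n → ℕ)).2) := by
      rintro ⟨p, hp⟩
      calc volume (A ∩ CZ.ho n p.1 p.2) ≤ volume (A ∩ dyadicCube n p.1 p.2) :=
            measure_mono (Set.inter_subset_inter_right _ (CZ.ho_subset_cc p.1 p.2))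
        _ ≤ δ' * volume (dyadicCube n p.1 p.2) := hTmeas p hp
        _ = δ' * volume (CZ.ho n p.1 p.2) := by rw [CZ.volume_cc, CZ.volume_ho]
    calc (∑' p : T, volume (A ∩ CZ.ho n (p:ℕ × (Fin n → ℕ)).1 (p:ℕ × (Fin n → ℕ)).2))
        ≤ ∑' p : T, δ' * volume (CZ.ho n (p:ℕ × (Fin n → ℕ)).1 (p:ℕ × (Fin n → ℕ)).2) :=
          ENNReal.tsum_le_tsum hterm
      _ = δ' * ∑' p : T, volume (CZ.ho n (p:ℕ × (Fin n → ℕ)).1 (p:ℕ × (Fin n → ℕ)).2) :=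
          ENNReal.tsum_mul_left
      _ = δ' * volume U := by
          rw [hU_def, measure_biUnion hTcount hpd' (fun p _ => CZ.measurable_ho p.1 p.2)]
      _ ≤ δ' * volume B := mul_le_mul_right (measure_mono hUB) _
  -- put everything together
  have hsplit : A ⊆ (A ∩ CZ.unitIco n) ∪ (A \ CZ.unitIco n) := fun x hx =>
    (em (x ∈ CZ.unitIco n)).elim (fun h => Or.inl ⟨hx, h⟩) (fun h => Or.inr ⟨hx, h⟩)
  calc volume A ≤ volume (A ∩ CZ.unitIco n) + volume (A \ CZ.unitIco n) :=
        le_trans (measure_mono hsplit) (measure_union_le _ _)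
    _ = volume (A ∩ CZ.unitIco n) := by rw [hbd, add_zero]
    _ ≤ volume Z + volume (A ∩ U) := le_trans (measure_mono hcover) (measure_union_le _ _)
    _ = volume (A ∩ U) := by rw [hZ0, zero_add]
    _ ≤ δ' * volume B := hAU

end CZMain
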